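/- arXiv:1803.01551 — 3 statements merged into one kernel-verified Lean document; each statement's English description precedes it below -/
import Mathlib

section
/- Let A, B be compact operators on a separable Hilbert space whose singular value sequences satisfy μ(k,A) ≤ ‖A‖_{1,∞}/(k+1) for all k. If B is logarithmically submajorized by A (i.e., ∏_{k=0}^n μ(k,B) ≤ ∏_{k=0}^n μ(k,A) for all n ≥ 0), then ‖B‖_{1,∞} ≤ e·‖A‖_{1,∞}, i.e., sup_n (n+1)μ(n,B) ≤ e·sup_n (n+1)μ(n,A). -/
open scoped ENNReal
open Nat

/-- The `k`-th singular value of a bounded operator `T` on a Hilbert space, defined (for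
compact `T`, equivalently to the eigenvalues of `|T|`) as the approximation number
`μ(k,T) = inf { ‖T − R‖ : rank R ≤ k }`. -/
noncomputable def singVal {H : Type*} [NormedAddCommGroup H] [InnerProductSpace ℂ H]
    (k : ℕ) (T : H →L[ℂ] H) : ℝ :=
  sInf {c : ℝ | ∃ R : H →L[ℂ] H, Module.rank ℂ (LinearMap.range (R : H →ₗ[ℂ] H)) ≤ (k : Cardinal) ∧ c = ‖T - R‖}

/-- The `L_{1,∞}` quasi-norm `‖T‖_{1,∞} = sup_k (k+1) μ(k,T)`, valued in `ℝ≥0∞`. -/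
noncomputable def norm1inf {H : Type*} [NormedAddCommGroup H] [InnerProductSpace ℂ H]
    (T : H →L[ℂ] H) : ℝ≥0∞ :=
  ⨆ k : ℕ, ENNReal.ofReal (((k : ℝ) + 1) * singVal k T)

lemma singVal_nonneg {H : Type*} [NormedAddCommGroup H] [InnerProductSpace ℂ H]
    (k : ℕ) (T : H →L[ℂ] H) : 0 ≤ singVal k T := by
  apply Real.sInf_nonneg
  rintro c ⟨R, _, rfl⟩
  exact norm_nonneg _

lemma singVal_anti {H : Type*} [NormedAddCommGroup H] [InnerProductSpace ℂ H]
    (T : H →L[ℂ] H) {k n : ℕ} (h : k ≤ n) : singVal n T ≤ singVal k T := by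
  apply csInf_le_csInf
  · exact ⟨0, by rintro c ⟨R, _, rfl⟩; exact norm_nonneg _⟩
  · refine ⟨‖T - 0‖, 0, ?_, rfl⟩
    have h0 : LinearMap.range ((0 : H →L[ℂ] H) : H →ₗ[ℂ] H) = ⊥ := by
      ext x; simp [LinearMap.mem_range, eq_comm]
    rw [h0, rank_bot]
    exact _root_.zero_le
  · rintro c ⟨R, hR, rfl⟩
    exact ⟨R, hR.trans (by exact_mod_cast Nat.cast_le.mpr h), rfl⟩

lemma nat_pow_le_exp_mul_factorial (m : ℕ) :
    (m : ℝ) ^ m ≤ Real.exp 1 ^ m * m ! := by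
  have h1 : (m : ℝ) ^ m / m ! ≤ Real.exp m := by
    refine le_trans ?_ (Real.sum_le_exp_of_nonneg (Nat.cast_nonneg m) (m + 1))
    refine Finset.single_le_sum (f := fun i => (m : ℝ) ^ i / i !) ?_ (Finset.self_mem_range_succ m)
    intro i _
    positivity
  rw [Real.exp_one_pow]
  have hm : (0 : ℝ) < m ! := by exact_mod_cast m.factorial_pos
  calc (m : ℝ) ^ m = (m : ℝ) ^ m / m ! * m ! := by field_simp
    _ ≤ Real.exp m * m ! := by nlinarith [Real.exp_pos (m : ℝ)]

/-- If `A, B` are compact operators on a separable Hilbert space whose singular values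
satisfy `μ(k,A) ≤ ‖A‖_{1,∞}/(k+1)`, and `B` is logarithmically submajorized by `A`, then
`‖B‖_{1,∞} ≤ e ‖A‖_{1,∞}`. -/
theorem stmt_0 {H : Type*} [NormedAddCommGroup H] [InnerProductSpace ℂ H] [CompleteSpace H]
    [TopologicalSpace.SeparableSpace H]
    (A B : H →L[ℂ] H) (hA : IsCompactOperator ⇑A) (hB : IsCompactOperator ⇑B)
    (hA1 : ∀ k : ℕ, ENNReal.ofReal (((k : ℝ) + 1) * singVal k A) ≤ norm1inf A)
    (hlog : ∀ n : ℕ, ∏ k ∈ Finset.range (n + 1), singVal k B ≤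
      ∏ k ∈ Finset.range (n + 1), singVal k A) :
    norm1inf B ≤ ENNReal.ofReal (Real.exp 1) * norm1inf A := by
  rcases eq_top_or_lt_top (norm1inf A) with hT | hT
  · rw [hT, ENNReal.mul_top (by simp [Real.exp_pos])]
    exact le_top
  set a := (norm1inf A).toReal with ha
  have ha0 : 0 ≤ a := ENNReal.toReal_nonneg
  have hAa : ∀ k : ℕ, ((k : ℝ) + 1) * singVal k A ≤ a := by
    intro k
    have h := hA1 k
    rw [← ENNReal.ofReal_toReal hT.ne] at h
    exact (ENNReal.ofReal_le_ofReal_iff ha0).mp h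
  have key : ∀ n : ℕ, ((n : ℝ) + 1) * singVal n B ≤ Real.exp 1 * a := by
    intro n
    have hkpos : ∀ k : ℕ, (0 : ℝ) < (k : ℝ) + 1 := fun k => by positivity
    have h1 : (singVal n B) ^ (n + 1) ≤ ∏ k ∈ Finset.range (n + 1), singVal k B := by
      calc (singVal n B) ^ (n + 1) = ∏ _k ∈ Finset.range (n + 1), singVal n B := by
            rw [Finset.prod_const, Finset.card_range]
        _ ≤ ∏ k ∈ Finset.range (n + 1), singVal k B :=
            Finset.prod_le_prod (fun i _ => singVal_nonneg n B)
              (fun i hi => singVal_anti B (Nat.le_of_lt_succ (Finset.mem_range.mp hi)))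
    have h2 : ∏ k ∈ Finset.range (n + 1), singVal k A ≤
        ∏ k ∈ Finset.range (n + 1), a / ((k : ℝ) + 1) := by
      refine Finset.prod_le_prod (fun k _ => singVal_nonneg k A) (fun k _ => ?_)
      rw [le_div_iff₀ (hkpos k), mul_comm]
      exact hAa k
    have h3 : ∏ k ∈ Finset.range (n + 1), a / ((k : ℝ) + 1) =
        a ^ (n + 1) / ((n + 1)! : ℝ) := by
      rw [Finset.prod_div_distrib, Finset.prod_const, Finset.card_range]
      congr 1
      have := Finset.prod_range_add_one_eq_factorial (n + 1)
      push_cast [← this]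
      rfl
    have hfac : (0 : ℝ) < ((n + 1)! : ℝ) := by exact_mod_cast (n + 1).factorial_pos
    have h4 : (((n : ℝ) + 1) * singVal n B) ^ (n + 1) ≤ (Real.exp 1 * a) ^ (n + 1) := by
      have hst := nat_pow_le_exp_mul_factorial (n + 1)
      have hcast : ((n + 1 : ℕ) : ℝ) = (n : ℝ) + 1 := by push_cast; ring
      rw [hcast] at hst
      have hchain : (singVal n B) ^ (n + 1) ≤ a ^ (n + 1) / ((n + 1)! : ℝ) :=
        h1.trans ((hlog n).trans (h2.trans_eq h3))
      calc (((n : ℝ) + 1) * singVal n B) ^ (n + 1)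
          = ((n : ℝ) + 1) ^ (n + 1) * (singVal n B) ^ (n + 1) := by rw [mul_pow]
        _ ≤ ((n : ℝ) + 1) ^ (n + 1) * (a ^ (n + 1) / ((n + 1)! : ℝ)) := by
            exact mul_le_mul_of_nonneg_left hchain (by positivity)
        _ ≤ (Real.exp 1 ^ (n + 1) * ((n + 1)! : ℝ)) * (a ^ (n + 1) / ((n + 1)! : ℝ)) := by
            exact mul_le_mul_of_nonneg_right hst (by positivity)
        _ = (Real.exp 1 * a) ^ (n + 1) := by
            rw [mul_pow]; field_simp
    refine le_of_pow_le_pow_left₀ (Nat.succ_ne_zero n) (by positivity) h4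
  rw [norm1inf]
  refine iSup_le fun n => ?_
  calc ENNReal.ofReal (((n : ℝ) + 1) * singVal n B)
      ≤ ENNReal.ofReal (Real.exp 1 * a) := ENNReal.ofReal_le_ofReal (key n)
    _ = ENNReal.ofReal (Real.exp 1) * ENNReal.ofReal a :=
        ENNReal.ofReal_mul (Real.exp_pos 1).le
    _ = ENNReal.ofReal (Real.exp 1) * norm1inf A := by
        rw [ha, ENNReal.ofReal_toReal hT.ne]
end

section
/- Let s ↦ a(s) be a function from ℝ to bounded operators on a separable Hilbert space, continuous in the weak operator topology, with a(s) trace class for every s and ∫_ℝ ‖a(s)‖_1 ds < ∞. Then the weak integral A = ∫_ℝ a(s) ds is trace class, ‖A‖_1 ≤ ∫_ℝ ‖a(s)‖_1 ds, and Tr(A) = ∫_ℝ Tr(a(s)) ds. -/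
open MeasureTheory
open scoped ENNReal ComplexInnerProductSpace

noncomputable def traceNorm {H : Type*} [NormedAddCommGroup H] [InnerProductSpace ℂ H]
    (T : H →L[ℂ] H) : ℝ≥0∞ :=
  ⨆ (N : ℕ) (e : Fin N → H) (f : Fin N → H) (_ : Orthonormal ℂ e) (_ : Orthonormal ℂ f),
    ∑ i, (‖⟪T (e i), f i⟫‖₊ : ℝ≥0∞)

lemma keyE {H : Type*} [NormedAddCommGroup H] [InnerProductSpace ℂ H]
    (T : H →L[ℂ] H) {ι : Type*} [Fintype ι] {v w : ι → H}
    (hv : Orthonormal ℂ v) (hw : Orthonormal ℂ w) :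
    ∑ i, (‖⟪T (v i), w i⟫‖₊ : ℝ≥0∞) ≤ traceNorm T := by
  classical
  let eqv := (Fintype.equivFin ι).symm
  have hsum : ∑ i, (‖⟪T (v i), w i⟫‖₊ : ℝ≥0∞)
      = ∑ j, (‖⟪T (v (eqv j)), w (eqv j)⟫‖₊ : ℝ≥0∞) :=
    (Fintype.sum_equiv eqv _ _ (fun j => rfl)).symm
  rw [hsum]
  exact le_iSup_of_le (Fintype.card ι) <| le_iSup_of_le (v ∘ eqv) <|
    le_iSup_of_le (w ∘ eqv) <|
    le_iSup_of_le (hv.comp eqv eqv.injective) <|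
    le_iSup_of_le (hw.comp eqv eqv.injective) le_rfl

lemma keyReal {H : Type*} [NormedAddCommGroup H] [InnerProductSpace ℂ H]
    {T : H →L[ℂ] H} (hT : traceNorm T ≠ ⊤) {ι : Type*} [Fintype ι] {v w : ι → H}
    (hv : Orthonormal ℂ v) (hw : Orthonormal ℂ w) :
    ∑ i, ‖⟪T (v i), w i⟫‖ ≤ (traceNorm T).toReal := by
  have h := ENNReal.toReal_mono hT (keyE T hv hw)
  rw [← ENNReal.coe_finset_sum, ENNReal.coe_toReal, NNReal.coe_sum] at h
  simpa using h

/-- Let `s ↦ a(s)` be WOT-continuous with trace-class values and `∫ ‖a(s)‖₁ ds < ∞`.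
Then the weak integral `A = ∫ a(s) ds` is trace class, `‖A‖₁ ≤ ∫ ‖a(s)‖₁ ds`, and
`Tr(A) = ∫ Tr(a(s)) ds` (traces computed in an orthonormal basis `e`). -/
theorem stmt_5 {H : Type*} [NormedAddCommGroup H] [InnerProductSpace ℂ H] [CompleteSpace H]
    (e : HilbertBasis ℕ ℂ H) (a : ℝ → H →L[ℂ] H)
    (hcont : ∀ ξ η : H, Continuous fun s : ℝ => ⟪a s ξ, η⟫)
    (htc : ∀ s : ℝ, traceNorm (a s) ≠ ⊤)
    (hint : Integrable fun s : ℝ => (traceNorm (a s)).toReal)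
    (A : H →L[ℂ] H)
    (hA : ∀ ξ η : H, ⟪A ξ, η⟫ = ∫ s : ℝ, ⟪a s ξ, η⟫) :
    traceNorm A ≤ ENNReal.ofReal (∫ s : ℝ, (traceNorm (a s)).toReal) ∧
      (∑' n : ℕ, ⟪A (e n), e n⟫) = ∫ s : ℝ, ∑' n : ℕ, ⟪a s (e n), e n⟫ := by
  classical
  -- Integrability of each matrix coefficient
  have hIntCoef : ∀ ξ η : H, ‖ξ‖ = 1 → ‖η‖ = 1 →
      Integrable (fun s : ℝ => ⟪a s ξ, η⟫) := by
    intro ξ η hξ hη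
    refine hint.mono' (hcont ξ η).aestronglyMeasurable (Filter.Eventually.of_forall fun s => ?_)
    have hv : Orthonormal ℂ (fun _ : Fin 1 => ξ) := by
      rw [orthonormal_iff_ite]
      intro i j
      simp [Subsingleton.elim i j, inner_self_eq_norm_sq_to_K, hξ]
    have hw : Orthonormal ℂ (fun _ : Fin 1 => η) := by
      rw [orthonormal_iff_ite]
      intro i j
      simp [Subsingleton.elim i j, inner_self_eq_norm_sq_to_K, hη]
    have := keyReal (htc s) hv hw
    simpa [Real.norm_eq_abs, abs_of_nonneg ENNReal.toReal_nonneg] using this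
  constructor
  · -- trace norm bound
    refine iSup_le fun N => iSup_le fun E => iSup_le fun F => iSup_le fun hE => iSup_le fun hF => ?_
    have hIntE : ∀ i : Fin N, Integrable (fun s : ℝ => ⟪a s (E i), F i⟫) :=
      fun i => hIntCoef _ _ (hE.1 i) (hF.1 i)
    have hreal : ∑ i, ‖⟪A (E i), F i⟫‖ ≤ ∫ s : ℝ, (traceNorm (a s)).toReal := by
      calc ∑ i, ‖⟪A (E i), F i⟫‖
          ≤ ∑ i, ∫ s : ℝ, ‖⟪a s (E i), F i⟫‖ := by
            refine Finset.sum_le_sum fun i _ => ?_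
            rw [hA]
            exact norm_integral_le_integral_norm _
        _ = ∫ s : ℝ, ∑ i, ‖⟪a s (E i), F i⟫‖ :=
            (integral_finset_sum _ fun i _ => (hIntE i).norm).symm
        _ ≤ ∫ s : ℝ, (traceNorm (a s)).toReal := by
            refine integral_mono (integrable_finset_sum _ fun i _ => (hIntE i).norm) hint
              fun s => keyReal (htc s) hE hF
    calc ∑ i, (‖⟪A (E i), F i⟫‖₊ : ℝ≥0∞)
        = ENNReal.ofReal (∑ i, ‖⟪A (E i), F i⟫‖) := by
          rw [ENNReal.ofReal_sum_of_nonneg fun i _ => norm_nonneg _]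
          exact Finset.sum_congr rfl fun i _ => (ofReal_norm _).symm
      _ ≤ ENNReal.ofReal (∫ s : ℝ, (traceNorm (a s)).toReal) :=
          ENNReal.ofReal_le_ofReal hreal
  · -- trace identity
    have hmeas : ∀ n : ℕ, AEStronglyMeasurable (fun s : ℝ => ⟪a s (e n), e n⟫)
        (volume : Measure ℝ) := fun n => (hcont (e n) (e n)).aestronglyMeasurable
    have hptwise : ∀ s : ℝ, ∑' n : ℕ, (‖⟪a s (e n), e n⟫‖₊ : ℝ≥0∞) ≤ traceNorm (a s) := by
      intro s
      rw [ENNReal.tsum_eq_iSup_sum]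
      refine iSup_le fun F => ?_
      have := keyE (a s) (v := fun i : F => e i) (w := fun i : F => e i)
        (e.orthonormal.comp _ Subtype.val_injective)
        (e.orthonormal.comp _ Subtype.val_injective)
      calc ∑ n ∈ F, (‖⟪a s (e n), e n⟫‖₊ : ℝ≥0∞)
          = ∑ i : F, (‖⟪a s (e i), e i⟫‖₊ : ℝ≥0∞) := (Finset.sum_coe_sort F _).symm
        _ ≤ traceNorm (a s) := this
    have hlintfin : ∫⁻ s : ℝ, traceNorm (a s) ∂volume ≠ ⊤ := by
      have h1 : ∀ s : ℝ, traceNorm (a s) = (‖(traceNorm (a s)).toReal‖₊ : ℝ≥0∞) := by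
        intro s
        rw [← enorm_eq_nnnorm, ← ofReal_norm, Real.norm_eq_abs,
          abs_of_nonneg ENNReal.toReal_nonneg, ENNReal.ofReal_toReal (htc s)]
      calc ∫⁻ s : ℝ, traceNorm (a s) ∂volume
          = ∫⁻ s : ℝ, (‖(traceNorm (a s)).toReal‖₊ : ℝ≥0∞) ∂volume := by
            exact lintegral_congr fun s => h1 s
        _ ≠ ⊤ := hint.hasFiniteIntegral.ne
    have hfin : ∑' n : ℕ, ∫⁻ s : ℝ, (‖⟪a s (e n), e n⟫‖₊ : ℝ≥0∞) ∂volume ≠ ⊤ := by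
      rw [← lintegral_tsum (f := fun n s => (‖⟪a s (e n), e n⟫‖₊ : ℝ≥0∞)) fun n => (hmeas n).enorm]
      exact ne_top_of_le_ne_top hlintfin (lintegral_mono fun s => hptwise s)
    have := integral_tsum hmeas hfin
    rw [this]
    exact tsum_congr fun n => hA _ _
end

section
/- Let f be a smooth function on ℝ with f(t) = |t|^{1/3} for |t| > 1, and for ε > 0 set f_ε(t) := f(t) e^{−ε²t²}. Then sup_{0<ε<1} (‖f_ε′‖_{L₂(ℝ)} + ‖f_ε″‖_{L₂(ℝ)}) < ∞; consequently (via the bound ‖𝓕(g′)‖_{L₁} ≤ c(‖g′‖_{L₂} + ‖g″‖_{L₂})) the L₁-norms of the Fourier transforms 𝓕(f_ε′) are uniformly bounded for ε ∈ (0,1). -/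
open MeasureTheory
open scoped ENNReal

open Set

lemma aux_xexp (x : ℝ) : x * Real.exp (-x) ≤ 1 := by
  have h := Real.add_one_le_exp x
  have hp : 0 < Real.exp x := Real.exp_pos x
  rw [Real.exp_neg, mul_inv_le_iff₀ hp]
  nlinarith

lemma aux_x2exp (x : ℝ) (hx : 0 ≤ x) : x ^ 2 * Real.exp (-x) ≤ 4 := by
  have h := Real.add_one_le_exp (x / 2)
  have hp : 0 < Real.exp (x/2) := Real.exp_pos _
  have hsq : (x/2) ^ 2 ≤ (Real.exp (x/2)) ^ 2 := by nlinarith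
  have hee : Real.exp (x/2) * Real.exp (x/2) = Real.exp x := by
    rw [← Real.exp_add]; ring_nf
  rw [Real.exp_neg, mul_inv_le_iff₀ (Real.exp_pos x)]
  nlinarith [Real.exp_pos x]

lemma sq_rpow_abs (t p : ℝ) : (t ^ 2) ^ p = |t| ^ (2 * p) := by
  rw [← sq_abs, ← Real.rpow_natCast |t| 2, ← Real.rpow_mul (abs_nonneg t)]
  norm_num

lemma hasDerivAt_sq_rpow (p : ℝ) (t : ℝ) (ht : t ≠ 0) :
    HasDerivAt (fun x : ℝ => (x ^ 2) ^ p) (2 * t * p * (t ^ 2) ^ (p - 1)) t := by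
  have h1 : HasDerivAt (fun x : ℝ => x ^ 2) (2 * t) t := by
    simpa using hasDerivAt_pow 2 t
  exact h1.rpow_const (Or.inl (pow_ne_zero 2 ht))

-- psi is deriv of phi (phi x = (x²)^(1/6))
lemma hasDerivAt_phi (t : ℝ) (ht : t ≠ 0) :
    HasDerivAt (fun x : ℝ => (x ^ 2) ^ ((1:ℝ)/6))
      (1/3 * t * (t ^ 2) ^ (-(5:ℝ)/6)) t := by
  have := hasDerivAt_sq_rpow ((1:ℝ)/6) t ht
  convert this using 1
  have : (1:ℝ)/6 - 1 = -(5:ℝ)/6 := by norm_num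
  rw [this]; ring

lemma hasDerivAt_psi (t : ℝ) (ht : t ≠ 0) :
    HasDerivAt (fun x : ℝ => 1/3 * x * (x ^ 2) ^ (-(5:ℝ)/6))
      (-(2:ℝ)/9 * (t ^ 2) ^ (-(5:ℝ)/6)) t := by
  have h1 : HasDerivAt (fun x : ℝ => x * (x ^ 2) ^ (-(5:ℝ)/6))
      (1 * (t ^ 2) ^ (-(5:ℝ)/6) + t * (2 * t * (-(5:ℝ)/6) * (t ^ 2) ^ (-(5:ℝ)/6 - 1))) t :=
    (hasDerivAt_id t).mul (hasDerivAt_sq_rpow (-(5:ℝ)/6) t ht)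
  have h2 := h1.const_mul ((1:ℝ)/3)
  have key : (1:ℝ)/3 * (1 * (t ^ 2) ^ (-(5:ℝ)/6) + t * (2 * t * (-(5:ℝ)/6) * (t ^ 2) ^ (-(5:ℝ)/6 - 1)))
      = -(2:ℝ)/9 * (t ^ 2) ^ (-(5:ℝ)/6) := by
    have ht2 : (0:ℝ) < t ^ 2 := by positivity
    have : (t ^ 2) ^ (-(5:ℝ)/6 - 1) = (t ^ 2) ^ (-(5:ℝ)/6) / t ^ 2 := by
      rw [Real.rpow_sub ht2, Real.rpow_one]
    rw [this]
    field_simp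
    ring
  rw [key] at h2
  exact h2.congr_of_eventuallyEq (Filter.Eventually.of_forall fun x => by beta_reduce; ring)

lemma deriv_f_eq (f : ℝ → ℝ) (hf1 : ∀ t : ℝ, 1 < |t| → f t = |t| ^ ((1 : ℝ) / 3))
    {t : ℝ} (ht : 1 < |t|) :
    deriv f t = 1/3 * t * (t ^ 2) ^ (-(5:ℝ)/6) ∧
    deriv (deriv f) t = -(2:ℝ)/9 * (t ^ 2) ^ (-(5:ℝ)/6) := by
  have ht0 : t ≠ 0 := by intro h; rw [h, abs_zero] at ht; linarith
  have hU : IsOpen {x : ℝ | 1 < |x|} := isOpen_lt continuous_const continuous_abs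
  have hmem : {x : ℝ | 1 < |x|} ∈ nhds t := hU.mem_nhds ht
  have heq : f =ᶠ[nhds t] fun x => (x ^ 2) ^ ((1:ℝ)/6) := by
    filter_upwards [hmem] with x hx
    rw [hf1 x hx, sq_rpow_abs]
    norm_num
  have hne : {x : ℝ | x ≠ 0} ∈ nhds t := isOpen_ne.mem_nhds ht0
  have heq3 : deriv (fun x : ℝ => (x ^ 2) ^ ((1:ℝ)/6)) =ᶠ[nhds t]
      fun x => 1/3 * x * (x ^ 2) ^ (-(5:ℝ)/6) := by
    filter_upwards [hne] with x hx
    exact (hasDerivAt_phi x hx).deriv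
  constructor
  · rw [heq.deriv_eq]
    exact (hasDerivAt_phi t ht0).deriv
  · rw [(heq.deriv.trans heq3).deriv_eq]
    exact (hasDerivAt_psi t ht0).deriv

lemma deriv_f_bound (f : ℝ → ℝ) (hf1 : ∀ t : ℝ, 1 < |t| → f t = |t| ^ ((1 : ℝ) / 3))
    {t : ℝ} (ht : 1 < |t|) :
    |deriv f t| ≤ |t| ^ (-(2:ℝ)/3) ∧ |deriv (deriv f) t| ≤ |t| ^ (-(5:ℝ)/3) := by
  have ht0 : (0:ℝ) < |t| := lt_trans one_pos ht
  obtain ⟨h1, h2⟩ := deriv_f_eq f hf1 ht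
  have hA : (t ^ 2) ^ (-(5:ℝ)/6) = |t| ^ (-(5:ℝ)/3) := by
    rw [sq_rpow_abs]; norm_num
  have hApos : (0:ℝ) < |t| ^ (-(5:ℝ)/3) := Real.rpow_pos_of_pos ht0 _
  constructor
  · rw [h1, hA]
    have : |1/3 * t * |t| ^ (-(5:ℝ)/3)| = 1/3 * |t| * |t| ^ (-(5:ℝ)/3) := by
      rw [abs_mul, abs_mul, abs_of_pos hApos]
      norm_num
    rw [this]
    have hcomb : |t| * |t| ^ (-(5:ℝ)/3) = |t| ^ (-(2:ℝ)/3) := by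
      nth_rewrite 1 [← Real.rpow_one |t|]
      rw [← Real.rpow_add ht0]
      norm_num
    rw [mul_assoc, hcomb]
    nlinarith [Real.rpow_pos_of_pos ht0 (-(2:ℝ)/3)]
  · rw [h2, hA, abs_mul, abs_of_pos hApos]
    have : |(-(2:ℝ)/9)| = 2/9 := by norm_num
    rw [this]
    nlinarith



set_option maxHeartbeats 1000000 in
lemma tail_bound (ε t : ℝ) (ht : 1 < |t|) (df ddf ft : ℝ)
    (hdf : |df| ≤ |t| ^ (-(2:ℝ)/3)) (hddf : |ddf| ≤ |t| ^ (-(5:ℝ)/3))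
    (hft : ft = |t| ^ ((1:ℝ)/3)) :
    |df * Real.exp (-(ε^2) * t^2) + ft * (Real.exp (-(ε^2) * t^2) * (-(ε^2)*(2*t)))|
      ≤ 3 * |t| ^ (-(2:ℝ)/3) ∧
    |ddf * Real.exp (-(ε^2) * t^2) + 2 * df * (-(ε^2)*(2*t)) * Real.exp (-(ε^2) * t^2)
        + ft * ((-(ε^2)*2) + (-(ε^2)*(2*t))^2) * Real.exp (-(ε^2) * t^2)|
      ≤ 23 * |t| ^ (-(2:ℝ)/3) := by
  have ht0 : (0:ℝ) < |t| := lt_trans one_pos ht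
  set q : ℝ := |t| ^ ((1:ℝ)/3) with hqdef
  set p : ℝ := |t| ^ (-(1:ℝ)/3) with hpdef
  set E : ℝ := Real.exp (-(ε^2) * t^2) with hEdef
  have hE0 : 0 < E := Real.exp_pos _
  have hE1 : E ≤ 1 := by
    rw [hEdef]
    apply Real.exp_le_one_iff.mpr
    nlinarith [sq_nonneg ε, sq_nonneg t, sq_nonneg (ε*t)]
  have hxE : ε^2 * t^2 * E ≤ 1 := by
    have := aux_xexp (ε^2 * t^2)
    rw [hEdef]
    rw [show -(ε^2) * t^2 = -(ε^2 * t^2) by ring]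
    exact this
  have hx2E : (ε^2 * t^2)^2 * E ≤ 4 := by
    have := aux_x2exp (ε^2 * t^2) (by positivity)
    rw [hEdef, show -(ε^2) * t^2 = -(ε^2 * t^2) by ring]
    exact this
  have hq0 : 0 < q := Real.rpow_pos_of_pos ht0 _
  have hp0 : 0 < p := Real.rpow_pos_of_pos ht0 _
  have hqp : q * p = 1 := by
    rw [hqdef, hpdef, ← Real.rpow_add ht0]
    norm_num
  have habs : |t| = q ^ 3 := by
    rw [hqdef, ← Real.rpow_natCast (|t| ^ ((1:ℝ)/3)) 3, ← Real.rpow_mul (abs_nonneg t)]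
    norm_num
  have ht2 : t ^ 2 = q ^ 6 := by
    rw [← sq_abs, habs]; ring
  have hP : |t| ^ (-(2:ℝ)/3) = p ^ 2 := by
    rw [hpdef, ← Real.rpow_natCast (|t| ^ (-(1:ℝ)/3)) 2, ← Real.rpow_mul (abs_nonneg t)]
    norm_num
  have hR : |t| ^ (-(5:ℝ)/3) = p ^ 5 := by
    rw [hpdef, ← Real.rpow_natCast (|t| ^ (-(1:ℝ)/3)) 5, ← Real.rpow_mul (abs_nonneg t)]
    norm_num
  have hq46 : q ^ 4 = q ^ 6 * p ^ 2 := by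
    have : q ^ 6 * p ^ 2 = q ^ 4 * (q * p) ^ 2 := by ring
    rw [this, hqp]; ring
  have hq16 : q = q ^ 6 * p ^ 5 := by
    have : q ^ 6 * p ^ 5 = q * (q * p) ^ 5 := by ring
    rw [this, hqp]; ring
  have hp52 : p ^ 5 ≤ p ^ 2 := by
    have hp1 : p ≤ 1 := by
      rw [hpdef]
      exact Real.rpow_le_one_of_one_le_of_nonpos ht.le (by norm_num)
    nlinarith
  clear hqdef hpdef hEdef
  clear_value q p E
  rw [hP] at hdf ⊢
  rw [hR] at hddf

  rw [hft]
  constructor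
  · calc |df * E + q * (E * (-(ε^2)*(2*t)))|
        ≤ |df * E| + |q * (E * (-(ε^2)*(2*t)))| := abs_add_le _ _
      _ = |df| * E + q * (E * (ε^2 * (2 * |t|))) := by
          rw [abs_mul, abs_mul, abs_mul, abs_mul, abs_neg, abs_mul,
            abs_of_pos hE0, abs_of_pos hq0, abs_of_nonneg (sq_nonneg ε)]
          norm_num
      _ = |df| * E + 2 * (ε^2 * t^2 * E) * p^2 := by
          rw [habs, ht2]
          have : q * (E * (ε^2 * (2 * q^3))) = 2 * ε^2 * E * q^4 := by ring
          rw [this, hq46]; ring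
      _ ≤ p^2 * 1 + 2 * 1 * p^2 := by
          have h1 : |df| * E ≤ p^2 * 1 := by
            apply mul_le_mul hdf hE1 hE0.le (by positivity)
          have h2 : 2 * (ε^2 * t^2 * E) * p^2 ≤ 2 * 1 * p^2 := by
            apply mul_le_mul_of_nonneg_right _ (by positivity)
            nlinarith
          linarith
      _ = 3 * p^2 := by ring
  · have a1 : |ddf * E| ≤ p^5 * E := by
      rw [abs_mul, abs_of_pos hE0]
      gcongr
    have hz : |(-(ε^2)*(2*t))| = ε^2 * (2*|t|) := by
      rw [abs_mul, abs_neg, abs_of_nonneg (sq_nonneg ε), abs_mul, abs_two]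
    have a2 : |2 * df * (-(ε^2)*(2*t)) * E| = 2 * |df| * (ε^2 * (2*|t|)) * E := by
      rw [abs_mul, abs_mul, abs_mul, abs_two, hz, abs_of_pos hE0]
    have a3 : |q * ((-(ε^2)*2) + (-(ε^2)*(2*t))^2) * E| ≤ q * (2*ε^2 + 4*ε^4*t^2) * E := by
      rw [abs_mul, abs_mul, abs_of_pos hE0, abs_of_pos hq0]
      have inner : |(-(ε^2)*2) + (-(ε^2)*(2*t))^2| ≤ 2*ε^2 + 4*ε^4*t^2 := by
        calc |(-(ε^2)*2) + (-(ε^2)*(2*t))^2| ≤ |(-(ε^2))*2| + |(-(ε^2)*(2*t))^2| := abs_add_le _ _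
          _ = 2*ε^2 + 4*ε^4*t^2 := by
            rw [abs_mul, abs_neg, abs_of_nonneg (sq_nonneg ε), abs_two,
              abs_of_nonneg (sq_nonneg ((-(ε^2)*(2*t))))]
            ring
      gcongr
    have e1 : p^5 * E ≤ p^2 := by nlinarith [mul_le_mul_of_nonneg_left hE1 (by positivity : (0:ℝ) ≤ p^5)]
    have e2 : 2 * |df| * (ε^2 * (2*|t|)) * E ≤ 4 * p^2 := by
      have step1 : 2 * |df| * (ε^2 * (2*|t|)) * E ≤ 2 * p^2 * (ε^2 * (2*|t|)) * E := by
        gcongr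
      have step2 : 2 * p^2 * (ε^2 * (2*|t|)) * E = 4 * (ε^2 * t^2 * E) * (p^5) := by
        rw [habs, ht2]
        have h3 : q ^ 3 * p ^ 2 = q^6 * p^5 := by
          have h4 : q^6*p^5 = q^3 * p^2 * (q*p)^3 := by ring
          rw [h4, hqp]; ring
        calc 2 * p^2 * (ε^2 * (2*q^3)) * E = 4 * ε^2 * E * (q^3 * p^2) := by ring
          _ = 4 * ε^2 * E * (q^6 * p^5) := by rw [h3]
          _ = 4 * (ε^2 * q^6 * E) * p^5 := by ring
      have step3 : 4 * (ε^2 * t^2 * E) * (p^5) ≤ 4 * 1 * p^5 := by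
        apply mul_le_mul_of_nonneg_right _ (by positivity)
        linarith
      linarith
    have e3 : q * (2*ε^2 + 4*ε^4*t^2) * E ≤ 18 * p^2 := by
      have expand : q * (2*ε^2 + 4*ε^4*t^2) * E
          = 2 * (ε^2*t^2*E) * p^5 + 4 * ((ε^2*t^2)^2*E) * p^5 := by
        rw [ht2]
        nth_rewrite 1 [hq16]
        ring
      rw [expand]
      have hp5 : (0:ℝ) ≤ p^5 := by positivity
      have b1 : 2 * (ε^2*t^2*E) * p^5 ≤ 2 * p^5 := by nlinarith [mul_le_mul_of_nonneg_right hxE hp5]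
      have b2 : 4 * ((ε^2*t^2)^2*E) * p^5 ≤ 16 * p^5 := by nlinarith [mul_le_mul_of_nonneg_right hx2E hp5]
      linarith
    have total : |ddf * E + 2 * df * (-(ε^2)*(2*t)) * E + q * ((-(ε^2)*2) + (-(ε^2)*(2*t))^2) * E|
        ≤ |ddf * E| + |2 * df * (-(ε^2)*(2*t)) * E| + |q * ((-(ε^2)*2) + (-(ε^2)*(2*t))^2) * E| :=
      abs_add_three _ _ _
    rw [a2] at total
    linarith


lemma F_derivs (f : ℝ → ℝ) (hf : ContDiff ℝ (⊤ : ℕ∞) f) (ε : ℝ) :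
    (deriv fun t : ℝ => f t * Real.exp (-(ε ^ 2) * t ^ 2)) =
      (fun t => deriv f t * Real.exp (-(ε^2) * t^2)
        + f t * (Real.exp (-(ε^2) * t^2) * (-(ε^2)*(2*t)))) ∧
    (deriv (deriv fun t : ℝ => f t * Real.exp (-(ε ^ 2) * t ^ 2))) =
      (fun t => deriv (deriv f) t * Real.exp (-(ε^2) * t^2)
        + 2 * deriv f t * (-(ε^2)*(2*t)) * Real.exp (-(ε^2) * t^2)
        + f t * ((-(ε^2)*2) + (-(ε^2)*(2*t))^2) * Real.exp (-(ε^2) * t^2)) := by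
  have hd : Differentiable ℝ f := hf.differentiable (by simp)
  have hd2 : ContDiff ℝ (⊤ : ℕ∞) (deriv f) := (contDiff_infty_iff_deriv.mp hf).2
  have hdd : Differentiable ℝ (deriv f) := hd2.differentiable (by simp)
  have hE : ∀ t : ℝ, HasDerivAt (fun t : ℝ => Real.exp (-(ε^2) * t^2))
      (Real.exp (-(ε^2)*t^2) * (-(ε^2)*(2*t))) t := by
    intro t
    have h1 : HasDerivAt (fun t : ℝ => -(ε^2) * t^2) (-(ε^2)*(2*t)) t := by
      have := (hasDerivAt_pow 2 t).const_mul (-(ε^2))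
      simpa using this.congr_deriv (by push_cast; ring)
    exact h1.exp
  have hL : ∀ t : ℝ, HasDerivAt (fun t : ℝ => -(ε^2)*(2*t)) (-(ε^2)*2) t := by
    intro t
    have h2t : HasDerivAt (fun t : ℝ => 2*t) 2 t := by
      simpa using (hasDerivAt_id t).const_mul (2:ℝ)
    simpa using h2t.const_mul (-(ε^2))
  have hF : ∀ t : ℝ, HasDerivAt (fun t : ℝ => f t * Real.exp (-(ε^2) * t^2))
      (deriv f t * Real.exp (-(ε^2) * t^2)
        + f t * (Real.exp (-(ε^2) * t^2) * (-(ε^2)*(2*t)))) t :=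
    fun t => ((hd t).hasDerivAt).mul (hE t)
  have h1 : (deriv fun t : ℝ => f t * Real.exp (-(ε ^ 2) * t ^ 2)) =
      (fun t => deriv f t * Real.exp (-(ε^2) * t^2)
        + f t * (Real.exp (-(ε^2) * t^2) * (-(ε^2)*(2*t)))) := by
    funext t
    exact (hF t).deriv
  refine ⟨h1, ?_⟩
  rw [h1]
  funext t
  have hG : HasDerivAt (fun t => deriv f t * Real.exp (-(ε^2) * t^2)
        + f t * (Real.exp (-(ε^2) * t^2) * (-(ε^2)*(2*t))))
      ((deriv (deriv f) t * Real.exp (-(ε^2) * t^2)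
          + deriv f t * (Real.exp (-(ε^2) * t^2) * (-(ε^2)*(2*t))))
        + (deriv f t * (Real.exp (-(ε^2) * t^2) * (-(ε^2)*(2*t)))
          + f t * ((Real.exp (-(ε^2) * t^2) * (-(ε^2)*(2*t))) * (-(ε^2)*(2*t))
              + Real.exp (-(ε^2) * t^2) * (-(ε^2)*2)))) t :=
    (((hdd t).hasDerivAt).mul (hE t)).add (((hd t).hasDerivAt).mul ((hE t).mul (hL t)))
  rw [hG.deriv]
  ring


lemma inner_bound (ε t : ℝ) (hε0 : 0 < ε) (hε1 : ε ≤ 1) (ht : |t| ≤ 1)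
    (df ddf ft M0 M1 M2 : ℝ)
    (hdf : |df| ≤ M1) (hddf : |ddf| ≤ M2) (hft : |ft| ≤ M0) :
    |df * Real.exp (-(ε^2) * t^2) + ft * (Real.exp (-(ε^2) * t^2) * (-(ε^2)*(2*t)))|
      ≤ M1 + 2 * M0 ∧
    |ddf * Real.exp (-(ε^2) * t^2) + 2 * df * (-(ε^2)*(2*t)) * Real.exp (-(ε^2) * t^2)
        + ft * ((-(ε^2)*2) + (-(ε^2)*(2*t))^2) * Real.exp (-(ε^2) * t^2)|
      ≤ M2 + 4 * M1 + 6 * M0 := by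
  set E : ℝ := Real.exp (-(ε^2) * t^2) with hEdef
  have hE0 : 0 < E := Real.exp_pos _
  have hE1 : E ≤ 1 := by
    rw [hEdef]
    apply Real.exp_le_one_iff.mpr
    nlinarith [sq_nonneg (ε*t)]
  clear_value E
  have hM0 : 0 ≤ M0 := le_trans (abs_nonneg _) hft
  have hM1 : 0 ≤ M1 := le_trans (abs_nonneg _) hdf
  have hM2 : 0 ≤ M2 := le_trans (abs_nonneg _) hddf
  have hε2 : ε^2 ≤ 1 := by nlinarith
  have hε2n : 0 ≤ ε^2 := sq_nonneg ε
  have hz : |(-(ε^2)*(2*t))| = ε^2 * (2*|t|) := by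
    rw [abs_mul, abs_neg, abs_of_nonneg (sq_nonneg ε), abs_mul, abs_two]
  have hz2 : ε^2 * (2*|t|) ≤ 2 := by nlinarith
  constructor
  · have a1 : |df * E| ≤ M1 := by
      rw [abs_mul, abs_of_pos hE0]
      calc |df| * E ≤ M1 * 1 := mul_le_mul hdf hE1 hE0.le hM1
        _ = M1 := mul_one _
    have a2 : |ft * (E * (-(ε^2)*(2*t)))| ≤ 2 * M0 := by
      rw [abs_mul, abs_mul, abs_of_pos hE0, hz]
      calc |ft| * (E * (ε^2 * (2*|t|))) ≤ M0 * (1 * 2) := by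
            apply mul_le_mul hft _ (by positivity) hM0
            apply mul_le_mul hE1 hz2 (by positivity) one_pos.le
        _ = 2 * M0 := by ring
    calc |df * E + ft * (E * (-(ε^2)*(2*t)))| ≤ |df * E| + |ft * (E * (-(ε^2)*(2*t)))| :=
          abs_add_le _ _
      _ ≤ M1 + 2 * M0 := by linarith
  · have a1 : |ddf * E| ≤ M2 := by
      rw [abs_mul, abs_of_pos hE0]
      calc |ddf| * E ≤ M2 * 1 := mul_le_mul hddf hE1 hE0.le hM2
        _ = M2 := mul_one _
    have a2 : |2 * df * (-(ε^2)*(2*t)) * E| ≤ 4 * M1 := by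
      rw [abs_mul, abs_mul, abs_mul, abs_two, hz, abs_of_pos hE0]
      have : 2 * |df| * (ε^2 * (2*|t|)) * E ≤ 2 * M1 * 2 * 1 := by
        have b1 : 2 * |df| ≤ 2 * M1 := by linarith
        have b2 : 2 * |df| * (ε^2 * (2*|t|)) ≤ 2 * M1 * 2 := by
          apply mul_le_mul b1 hz2 (by positivity) (by linarith)
        apply mul_le_mul b2 hE1 hE0.le (by positivity)
      linarith
    have a3 : |ft * ((-(ε^2)*2) + (-(ε^2)*(2*t))^2) * E| ≤ 6 * M0 := by
      rw [abs_mul, abs_mul, abs_of_pos hE0]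
      have inner : |(-(ε^2)*2) + (-(ε^2)*(2*t))^2| ≤ 6 := by
        calc |(-(ε^2)*2) + (-(ε^2)*(2*t))^2| ≤ |(-(ε^2))*2| + |(-(ε^2)*(2*t))^2| := abs_add_le _ _
          _ = 2*ε^2 + (ε^2 * (2*|t|))^2 := by
            rw [abs_mul, abs_neg, abs_of_nonneg (sq_nonneg ε), abs_two,
              abs_of_nonneg (sq_nonneg ((-(ε^2)*(2*t))))]
            rw [show ((-(ε^2)*(2*t))^2 : ℝ) = (ε^2 * (2*t))^2 by ring]
            rw [show ((ε^2 * (2*|t|))^2 : ℝ) = (ε^2*2)^2 * |t|^2 by ring, sq_abs]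
            ring
          _ ≤ 2 + 4 := by
            have hnn : (0:ℝ) ≤ ε ^ 2 * (2 * |t|) := by positivity
            nlinarith [mul_le_mul hz2 hz2 hnn (by norm_num : (0:ℝ) ≤ 2)]
          _ = 6 := by norm_num
      have : |ft| * |(-(ε^2)*2) + (-(ε^2)*(2*t))^2| * E ≤ M0 * 6 * 1 := by
        apply mul_le_mul _ hE1 hE0.le (by positivity)
        apply mul_le_mul hft inner (abs_nonneg _) hM0
      linarith
    calc |ddf * E + 2 * df * (-(ε^2)*(2*t)) * E + ft * ((-(ε^2)*2) + (-(ε^2)*(2*t))^2) * E|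
        ≤ |ddf * E| + |2 * df * (-(ε^2)*(2*t)) * E| + |ft * ((-(ε^2)*2) + (-(ε^2)*(2*t))^2) * E| :=
          abs_add_three _ _ _
      _ ≤ M2 + 4 * M1 + 6 * M0 := by linarith


lemma memLp_b : MemLp (fun t : ℝ => (max 1 (t^2)) ^ (-(1:ℝ)/3)) 2 volume := by
  have hcont : Continuous (fun t : ℝ => (max 1 (t^2)) ^ (-(1:ℝ)/3)) := by
    apply Continuous.rpow_const (continuous_const.max (continuous_pow 2))
    intro t
    left
    positivity
  rw [memLp_two_iff_integrable_sq hcont.aestronglyMeasurable]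
  have hW : (fun t : ℝ => ((max 1 (t^2)) ^ (-(1:ℝ)/3))^2)
      = fun t : ℝ => (max 1 (t^2)) ^ (-(2:ℝ)/3) := by
    funext t
    have h0 : (0:ℝ) ≤ max 1 (t^2) := le_trans one_pos.le (le_max_left _ _)
    rw [← Real.rpow_natCast ((max 1 (t^2)) ^ (-(1:ℝ)/3)) 2, ← Real.rpow_mul h0]
    norm_num
  rw [hW]
  set w : ℝ → ℝ := fun t : ℝ => (max 1 (t^2)) ^ (-(2:ℝ)/3) with hwdef
  have hwcont : Continuous w := by
    apply Continuous.rpow_const (continuous_const.max (continuous_pow 2))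
    intro t; left; positivity
  have hweq : ∀ x : ℝ, 1 < x → w x = x ^ (-(4:ℝ)/3) := by
    intro x hx
    have h1 : max 1 (x^2) = x^2 := max_eq_right (by nlinarith)
    rw [hwdef]
    simp only []
    rw [h1, ← Real.rpow_natCast x 2, ← Real.rpow_mul (by linarith)]
    norm_num
  have hIoi : IntegrableOn w (Ioi 1) volume := by
    have hint : IntegrableOn (fun x : ℝ => x ^ (-(4:ℝ)/3)) (Ioi 1) volume := by
      have := integrableOn_Ioi_rpow_of_lt (a := -(4:ℝ)/3) (by norm_num) (c := 1) one_pos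
      exact this
    apply hint.congr_fun _ measurableSet_Ioi
    intro x hx
    exact (hweq x hx).symm
  have hIcc : IntegrableOn w (Icc (-1) 1) volume :=
    hwcont.continuousOn.integrableOn_compact isCompact_Icc
  have hweven : ∀ x : ℝ, w (-x) = w x := by
    intro x
    rw [hwdef]; simp [neg_sq]
  have hIio : IntegrableOn w (Iio (-1)) volume := by
    have h1 : Integrable ((Ioi (1:ℝ)).indicator w) volume :=
      (integrable_indicator_iff measurableSet_Ioi).2 hIoi
    have h2 : Integrable (fun x => ((Ioi (1:ℝ)).indicator w) (-x)) volume := h1.comp_neg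
    have h3 : (fun x => ((Ioi (1:ℝ)).indicator w) (-x)) = (Iio (-1:ℝ)).indicator w := by
      funext x
      by_cases hx : x < -1
      · rw [Set.indicator_of_mem (show x ∈ Iio (-1:ℝ) from hx),
          Set.indicator_of_mem (show -x ∈ Ioi (1:ℝ) by simp only [mem_Ioi]; linarith)]
        exact hweven x
      · rw [Set.indicator_of_notMem (show x ∉ Iio (-1:ℝ) from hx),
          Set.indicator_of_notMem]
        simp only [mem_Ioi]
        push_neg at hx ⊢
        linarith
    rw [h3] at h2
    exact (integrable_indicator_iff measurableSet_Iio).1 h2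
  have hunion : IntegrableOn w (Iio (-1) ∪ (Icc (-1) 1 ∪ Ioi 1)) volume :=
    hIio.union (hIcc.union hIoi)
  rw [← integrableOn_univ]
  apply hunion.mono_set
  intro x _
  simp only [mem_union, mem_Iio, mem_Icc, mem_Ioi]
  by_cases h1 : x < -1
  · left; exact h1
  · push_neg at h1
    by_cases h2 : x ≤ 1
    · right; left; exact ⟨h1, h2⟩
    · right; right; linarith

set_option maxHeartbeats 1000000 in
/-- Let `f` be smooth with `f(t) = |t|^{1/3}` for `|t| > 1`, and `f_ε(t) = f(t)e^{-ε²t²}`.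
Then the `L²` norms of `f_ε'` and `f_ε''` are uniformly bounded for `ε ∈ (0,1)`;
consequently, via the Fourier bound `‖𝓕 g‖_{L¹} ≤ c(‖g‖_{L²} + ‖g'‖_{L²})` (assumed as a
black box), the `L¹` norms of the Fourier transforms `𝓕(f_ε')` are uniformly bounded. -/
theorem stmt_17 (f : ℝ → ℝ) (hf : ContDiff ℝ (⊤ : ℕ∞) f)
    (hf1 : ∀ t : ℝ, 1 < |t| → f t = |t| ^ ((1 : ℝ) / 3))
    (c : ℝ) (hc : 0 < c)
    (hFour : ∀ g : ℝ → ℝ, MemLp g 2 volume → MemLp (deriv g) 2 volume →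
      eLpNorm (FourierTransform.fourier (fun t : ℝ => (g t : ℂ)) : ℝ → ℂ) 1 volume ≤
        ENNReal.ofReal (c * ((eLpNorm g 2 volume).toReal + (eLpNorm (deriv g) 2 volume).toReal))) :
    (∃ C : ℝ, ∀ ε : ℝ, 0 < ε → ε < 1 →
      eLpNorm (deriv fun t : ℝ => f t * Real.exp (-(ε ^ 2) * t ^ 2)) 2 volume ≤
          ENNReal.ofReal C ∧
        eLpNorm (deriv (deriv fun t : ℝ => f t * Real.exp (-(ε ^ 2) * t ^ 2))) 2 volume ≤
          ENNReal.ofReal C) ∧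
    ∃ C' : ℝ, ∀ ε : ℝ, 0 < ε → ε < 1 →
      eLpNorm (FourierTransform.fourier
          (fun t : ℝ => (((deriv fun u : ℝ => f u * Real.exp (-(ε ^ 2) * u ^ 2)) t : ℝ) : ℂ)) : ℝ → ℂ)
        1 volume ≤ ENNReal.ofReal C' := by
  -- bounds on the compact set
  have hd2 : ContDiff ℝ (⊤ : ℕ∞) (deriv f) := (contDiff_infty_iff_deriv.mp hf).2
  have hd3 : ContDiff ℝ (⊤ : ℕ∞) (deriv (deriv f)) := (contDiff_infty_iff_deriv.mp hd2).2
  obtain ⟨M0, hM0⟩ := (isCompact_Icc (a := (-1:ℝ)) (b := 1)).exists_bound_of_continuousOn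
    hf.continuous.continuousOn
  obtain ⟨M1, hM1⟩ := (isCompact_Icc (a := (-1:ℝ)) (b := 1)).exists_bound_of_continuousOn
    hd2.continuous.continuousOn
  obtain ⟨M2, hM2⟩ := (isCompact_Icc (a := (-1:ℝ)) (b := 1)).exists_bound_of_continuousOn
    hd3.continuous.continuousOn
  set K : ℝ := (max M2 0) + 4 * (max M1 0) + 6 * (max M0 0) + 23 with hKdef
  have hKpos : 0 < K := by
    have := le_max_right M0 0; have := le_max_right M1 0; have := le_max_right M2 0
    rw [hKdef]; linarith
  set b : ℝ → ℝ := fun t => (max 1 (t^2)) ^ (-(1:ℝ)/3) with hbdef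
  have hbpos : ∀ t, 0 < b t := by
    intro t
    apply Real.rpow_pos_of_pos
    exact lt_max_of_lt_left one_pos
  -- global pointwise bound
  have key : ∀ ε : ℝ, 0 < ε → ε < 1 → ∀ t : ℝ,
      |deriv f t * Real.exp (-(ε^2) * t^2)
        + f t * (Real.exp (-(ε^2) * t^2) * (-(ε^2)*(2*t)))| ≤ K * b t ∧
      |deriv (deriv f) t * Real.exp (-(ε^2) * t^2)
        + 2 * deriv f t * (-(ε^2)*(2*t)) * Real.exp (-(ε^2) * t^2)
        + f t * ((-(ε^2)*2) + (-(ε^2)*(2*t))^2) * Real.exp (-(ε^2) * t^2)| ≤ K * b t := by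
    intro ε hε0 hε1 t
    by_cases ht : |t| ≤ 1
    · have htmem : t ∈ Icc (-1:ℝ) 1 := by
        rw [mem_Icc]; constructor <;> [linarith [abs_le.mp ht |>.1]; exact (abs_le.mp ht).2]
      have hb1 : b t = 1 := by
        rw [hbdef]
        simp only []
        rw [max_eq_left (by nlinarith [sq_abs t, abs_nonneg t] : t^2 ≤ 1), Real.one_rpow]
      have h0 : |f t| ≤ max M0 0 := le_trans (by simpa [Real.norm_eq_abs] using hM0 t htmem) (le_max_left _ _)
      have h1 : |deriv f t| ≤ max M1 0 := le_trans (by simpa [Real.norm_eq_abs] using hM1 t htmem) (le_max_left _ _)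
      have h2 : |deriv (deriv f) t| ≤ max M2 0 := le_trans (by simpa [Real.norm_eq_abs] using hM2 t htmem) (le_max_left _ _)
      obtain ⟨i1, i2⟩ := inner_bound ε t hε0 hε1.le ht (deriv f t) (deriv (deriv f) t) (f t)
        (max M0 0) (max M1 0) (max M2 0) h1 h2 h0
      rw [hb1, mul_one]
      have hmm : max M1 0 + 2 * max M0 0 ≤ K := by
        have := le_max_right M2 0; rw [hKdef]; linarith [le_max_right M0 0, le_max_right M1 0]
      have hmm2 : max M2 0 + 4 * max M1 0 + 6 * max M0 0 ≤ K := by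
        rw [hKdef]; linarith
      exact ⟨le_trans i1 hmm, le_trans i2 hmm2⟩
    · push_neg at ht
      have hbP : b t = |t| ^ (-(2:ℝ)/3) := by
        rw [hbdef]
        simp only []
        rw [max_eq_right (by nlinarith [sq_abs t] : (1:ℝ) ≤ t^2), sq_rpow_abs]
        norm_num
      obtain ⟨hdf, hddf⟩ := deriv_f_bound f hf1 ht
      obtain ⟨t1, t2⟩ := tail_bound ε t ht (deriv f t) (deriv (deriv f) t) (f t) hdf hddf (hf1 t ht)
      have hPpos : (0:ℝ) < |t| ^ (-(2:ℝ)/3) :=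
        Real.rpow_pos_of_pos (lt_trans one_pos ht) _
      rw [hbP]
      constructor
      · apply le_trans t1
        apply mul_le_mul_of_nonneg_right _ hPpos.le
        rw [hKdef]; linarith [le_max_right M0 0, le_max_right M1 0, le_max_right M2 0]
      · apply le_trans t2
        apply mul_le_mul_of_nonneg_right _ hPpos.le
        rw [hKdef]; linarith [le_max_right M0 0, le_max_right M1 0, le_max_right M2 0]
  -- the dominating function is in L²
  have hKb : MemLp (fun t => K * b t) 2 volume := memLp_b.const_mul K
  set C : ℝ := (eLpNorm (fun t => K * b t) 2 volume).toReal with hCdef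
  have hfin : eLpNorm (fun t => K * b t) 2 volume ≠ ⊤ := hKb.2.ne
  have hCen : eLpNorm (fun t => K * b t) 2 volume = ENNReal.ofReal C := by
    rw [hCdef, ENNReal.ofReal_toReal hfin]
  have hC0 : 0 ≤ C := ENNReal.toReal_nonneg
  -- part 1
  have part1 : ∀ ε : ℝ, 0 < ε → ε < 1 →
      eLpNorm (deriv fun t : ℝ => f t * Real.exp (-(ε ^ 2) * t ^ 2)) 2 volume ≤
          ENNReal.ofReal C ∧
        eLpNorm (deriv (deriv fun t : ℝ => f t * Real.exp (-(ε ^ 2) * t ^ 2))) 2 volume ≤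
          ENNReal.ofReal C := by
    intro ε hε0 hε1
    obtain ⟨hd1, hd2'⟩ := F_derivs f hf ε
    rw [hd2', hd1]
    constructor
    · rw [← hCen]
      apply eLpNorm_mono
      intro x
      rw [Real.norm_eq_abs, Real.norm_eq_abs]
      exact le_trans ((key ε hε0 hε1 x).1) (le_abs_self _)
    · rw [← hCen]
      apply eLpNorm_mono
      intro x
      rw [Real.norm_eq_abs, Real.norm_eq_abs]
      exact le_trans ((key ε hε0 hε1 x).2) (le_abs_self _)
  refine ⟨⟨C, part1⟩, ⟨c * (C + C), ?_⟩⟩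
  intro ε hε0 hε1
  -- smoothness of F and its derivatives
  have hFc : ContDiff ℝ (⊤ : ℕ∞) (fun t : ℝ => f t * Real.exp (-(ε ^ 2) * t ^ 2)) := by
    apply hf.mul
    apply Real.contDiff_exp.comp
    exact contDiff_const.mul (contDiff_id.pow 2)
  have hg : ContDiff ℝ (⊤ : ℕ∞) (deriv fun t : ℝ => f t * Real.exp (-(ε ^ 2) * t ^ 2)) :=
    (contDiff_infty_iff_deriv.mp hFc).2
  have hgg : ContDiff ℝ (⊤ : ℕ∞) (deriv (deriv fun t : ℝ => f t * Real.exp (-(ε ^ 2) * t ^ 2))) :=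
    (contDiff_infty_iff_deriv.mp hg).2
  obtain ⟨p1, p2⟩ := part1 ε hε0 hε1
  have hm1 : MemLp (deriv fun t : ℝ => f t * Real.exp (-(ε ^ 2) * t ^ 2)) 2 volume :=
    ⟨hg.continuous.aestronglyMeasurable, lt_of_le_of_lt p1 ENNReal.ofReal_lt_top⟩
  have hm2 : MemLp (deriv (deriv fun t : ℝ => f t * Real.exp (-(ε ^ 2) * t ^ 2))) 2 volume :=
    ⟨hgg.continuous.aestronglyMeasurable, lt_of_le_of_lt p2 ENNReal.ofReal_lt_top⟩
  have happ := hFour (deriv fun t : ℝ => f t * Real.exp (-(ε ^ 2) * t ^ 2)) hm1 hm2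
  apply le_trans happ
  apply ENNReal.ofReal_le_ofReal
  apply mul_le_mul_of_nonneg_left _ hc.le
  have e1 : (eLpNorm (deriv fun t : ℝ => f t * Real.exp (-(ε ^ 2) * t ^ 2)) 2 volume).toReal ≤ C := by
    have := ENNReal.toReal_mono ENNReal.ofReal_ne_top p1
    rwa [ENNReal.toReal_ofReal hC0] at this
  have e2 : (eLpNorm (deriv (deriv fun t : ℝ => f t * Real.exp (-(ε ^ 2) * t ^ 2))) 2 volume).toReal ≤ C := by
    have := ENNReal.toReal_mono ENNReal.ofReal_ne_top p2
    rwa [ENNReal.toReal_ofReal hC0] at this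
  linarith
end
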